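/- Let A, X, Y be jointly distributed random variables on a probability space, taking values in finite nonempty sets Q_A, Q_X, Q_Y respectively. Suppose that for every x ∈ Q_X and y ∈ Q_Y there is at most one value a ∈ Q_A such that P(A = a, X = x) > 0 and P(A = a, Y = y) > 0. Then H[A | X] + H[A | Y] ≤ H[A], and consequently I[A : X] = 0 and I[A : Y] = 0 together imply I[A : (X, Y)] = 0. -/

import Mathlib

open MeasureTheory ProbabilityTheory
open scoped Classical

/-- Shannon entropy (natural logarithm) of a random variable with values in a
finite set, computed from its distribution under `μ`. -/
noncomputable def Hshannon {Ω : Type*} [MeasurableSpace Ω] (μ : Measure Ω)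
    {S : Type*} [Fintype S] (X : Ω → S) : ℝ :=
  ∑ x : S, Real.negMulLog (μ (X ⁻¹' {x})).toReal

/-- Conditional entropy `H[X | Y] = H[X, Y] - H[Y]`. -/
noncomputable def condH {Ω : Type*} [MeasurableSpace Ω] (μ : Measure Ω)
    {S T : Type*} [Fintype S] [Fintype T] (X : Ω → S) (Y : Ω → T) : ℝ :=
  Hshannon μ (fun ω => (X ω, Y ω)) - Hshannon μ Y

/-- Mutual information `I[X : Y] = H[X] + H[Y] - H[X, Y]`. -/
noncomputable def mutInfo {Ω : Type*} [MeasurableSpace Ω] (μ : Measure Ω)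
    {S T : Type*} [Fintype S] [Fintype T] (X : Ω → S) (Y : Ω → T) : ℝ :=
  Hshannon μ X + Hshannon μ Y - Hshannon μ (fun ω => (X ω, Y ω))

/-- Conditional mutual information
`I[X : Y | Z] = H[X, Z] + H[Y, Z] - H[X, Y, Z] - H[Z]`. -/
noncomputable def cmi {Ω : Type*} [MeasurableSpace Ω] (μ : Measure Ω)
    {S T U : Type*} [Fintype S] [Fintype T] [Fintype U]
    (X : Ω → S) (Y : Ω → T) (Z : Ω → U) : ℝ :=
  Hshannon μ (fun ω => (X ω, Z ω)) + Hshannon μ (fun ω => (Y ω, Z ω))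
    - Hshannon μ (fun ω => (X ω, Y ω, Z ω)) - Hshannon μ Z

/-! ### Auxiliary lemmas -/

section Aux

/-- Gibbs-type inequality from `log t ≤ t - 1`. -/
private lemma gibbs_aux {ι : Type*} [Fintype ι] (p q : ι → ℝ)
    (hp : ∀ i, 0 ≤ p i) (hq : ∀ i, 0 ≤ q i)
    (hps : ∑ i, p i = 1) (hqs : ∑ i, q i ≤ 1)
    (hpq : ∀ i, 0 < p i → 0 < q i) :
    ∑ i, p i * (Real.log (q i) - Real.log (p i)) ≤ 0 := by
  have key : ∀ i, p i * (Real.log (q i) - Real.log (p i)) ≤ q i - p i := by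
    intro i
    rcases eq_or_lt_of_le (hp i) with h | h
    · simp [← h, hq i]
    · have hqi := hpq i h
      have h1 : Real.log (q i) - Real.log (p i) = Real.log (q i / p i) := by
        rw [Real.log_div hqi.ne' h.ne']
      have h2 : Real.log (q i / p i) ≤ q i / p i - 1 :=
        Real.log_le_sub_one_of_pos (div_pos hqi h)
      calc p i * (Real.log (q i) - Real.log (p i)) ≤ p i * (q i / p i - 1) := by
            rw [h1]; exact mul_le_mul_of_nonneg_left h2 (hp i)
        _ = q i - p i := by field_simp
  calc ∑ i, p i * (Real.log (q i) - Real.log (p i)) ≤ ∑ i, (q i - p i) :=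
        Finset.sum_le_sum fun i _ => key i
    _ = (∑ i, q i) - (∑ i, p i) := Finset.sum_sub_distrib _ _
    _ ≤ 0 := by rw [hps]; linarith

/-- `negMulLog` is superadditive on nonnegative families. -/
private lemma negMulLog_sum_le {ι : Type*} [Fintype ι] (s : ι → ℝ) (hs : ∀ i, 0 ≤ s i) :
    Real.negMulLog (∑ i, s i) ≤ ∑ i, Real.negMulLog (s i) := by
  have h1 : Real.negMulLog (∑ i, s i) = ∑ i, -(s i * Real.log (∑ j, s j)) := by
    rw [Finset.sum_neg_distrib, ← Finset.sum_mul, Real.negMulLog, neg_mul]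
  rw [h1]
  refine Finset.sum_le_sum fun i _ => ?_
  rcases eq_or_lt_of_le (hs i) with h | h
  · simp [← h]
  · have hle : s i ≤ ∑ j, s j := Finset.single_le_sum (fun j _ => hs j) (Finset.mem_univ i)
    have := Real.log_le_log h hle
    rw [Real.negMulLog, neg_mul]
    nlinarith
  
private lemma sum_ite_le_of_unique {α : Type*} [Fintype α] (P : α → Prop) [DecidablePred P]
    {c : ℝ} (hc : 0 ≤ c) (hu : ∀ a a', P a → P a' → a = a') :
    ∑ a, (if P a then c else 0) ≤ c := by
  rw [← Finset.sum_filter]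
  rw [Finset.sum_const]
  have hcard : (Finset.univ.filter P).card ≤ 1 := by
    apply Finset.card_le_one.mpr
    intro a ha b hb
    exact hu a b (Finset.mem_filter.mp ha).2 (Finset.mem_filter.mp hb).2
  have : ((Finset.univ.filter P).card : ℝ) ≤ 1 := by exact_mod_cast hcard
  rw [nsmul_eq_mul]
  nlinarith

variable {Ω : Type*} [MeasurableSpace Ω] (μ : Measure Ω) [IsProbabilityMeasure μ]

/-- Decomposing the measure of a measurable set along the fibers of `W`. -/
private lemma meas_decomp {S : Type*} [Fintype S] [MeasurableSpace S]
    [MeasurableSingletonClass S]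
    {W : Ω → S} (hW : Measurable W) {E : Set Ω} (hE : MeasurableSet E) :
    (μ E).toReal = ∑ s : S, (μ (E ∩ W ⁻¹' {s})).toReal := by
  rw [← ENNReal.toReal_sum (fun s _ => measure_ne_top μ _)]
  congr 1
  have hcov : E = ⋃ s : S, E ∩ W ⁻¹' {s} := by
    ext ω; simp
  have hdisj : Pairwise (Function.onFun Disjoint (fun s : S => E ∩ W ⁻¹' {s})) := by
    intro s t hst
    refine Set.disjoint_left.mpr ?_
    rintro ω ⟨-, hs⟩ ⟨-, ht⟩
    simp only [Set.mem_preimage, Set.mem_singleton_iff] at hs ht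
    exact hst (hs ▸ ht ▸ rfl)
  have := measure_iUnion (μ := μ) hdisj
    (fun s => hE.inter (hW (measurableSet_singleton s)))
  rw [← hcov] at this
  rw [this, tsum_fintype]

private lemma sum_pre_one {S : Type*} [Fintype S] [MeasurableSpace S]
    [MeasurableSingletonClass S] {W : Ω → S} (hW : Measurable W) :
    ∑ s : S, (μ (W ⁻¹' {s})).toReal = 1 := by
  have h := meas_decomp μ hW (W := W) MeasurableSet.univ
  simp only [Set.univ_inter, measure_univ, ENNReal.toReal_one] at h
  exact h.symm

private lemma pair_pre {S T : Type*} (V : Ω → S) (W : Ω → T) (s : S) (t : T) :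
    (fun ω => (V ω, W ω)) ⁻¹' {(s, t)} = V ⁻¹' {s} ∩ W ⁻¹' {t} := by
  ext ω
  simp [Prod.ext_iff]

private lemma Hshannon_pair {S T : Type*} [Fintype S] [Fintype T] (V : Ω → S) (W : Ω → T) :
    Hshannon μ (fun ω => (V ω, W ω))
      = ∑ s : S, ∑ t : T, Real.negMulLog (μ (V ⁻¹' {s} ∩ W ⁻¹' {t})).toReal := by
  rw [Hshannon, Fintype.sum_prod_type]
  refine Finset.sum_congr rfl fun s _ => Finset.sum_congr rfl fun t _ => ?_
  rw [pair_pre]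

variable {SA SX : Type*}
  [Fintype SA] [MeasurableSpace SA] [MeasurableSingletonClass SA]
  [Fintype SX] [MeasurableSpace SX] [MeasurableSingletonClass SX]

/-- Monotonicity: `H[W] ≤ H[V, W]`. -/
private lemma Hshannon_le_pair (V : Ω → SA) (W : Ω → SX)
    (hV : Measurable V) (hW : Measurable W) :
    Hshannon μ W ≤ Hshannon μ (fun ω => (V ω, W ω)) := by
  rw [Hshannon_pair μ V W, Finset.sum_comm, Hshannon]
  refine Finset.sum_le_sum fun t _ => ?_
  have hmarg : (μ (W ⁻¹' {t})).toReal = ∑ s : SA, (μ (V ⁻¹' {s} ∩ W ⁻¹' {t})).toReal := by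
    rw [meas_decomp μ hV (hW (measurableSet_singleton t))]
    refine Finset.sum_congr rfl fun s _ => ?_
    rw [Set.inter_comm]
  rw [hmarg]
  exact negMulLog_sum_le _ (fun s => ENNReal.toReal_nonneg)

/-- Subadditivity: `H[V, W] ≤ H[V] + H[W]`. -/
private lemma Hshannon_pair_le (V : Ω → SA) (W : Ω → SX)
    (hV : Measurable V) (hW : Measurable W) :
    Hshannon μ (fun ω => (V ω, W ω)) ≤ Hshannon μ V + Hshannon μ W := by
  set p : SA → SX → ℝ := fun s t => (μ (V ⁻¹' {s} ∩ W ⁻¹' {t})).toReal with hp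
  have hp0 : ∀ s t, 0 ≤ p s t := fun s t => ENNReal.toReal_nonneg
  have hmV : ∀ s, (μ (V ⁻¹' {s})).toReal = ∑ t, p s t := fun s =>
    meas_decomp μ hW (hV (measurableSet_singleton s))
  have hmW : ∀ t, (μ (W ⁻¹' {t})).toReal = ∑ s, p s t := by
    intro t
    rw [meas_decomp μ hV (hW (measurableSet_singleton t))]
    exact Finset.sum_congr rfl fun s _ => by rw [Set.inter_comm]
  have hVle : ∀ s t, p s t ≤ (μ (V ⁻¹' {s})).toReal := by
    intro s t; rw [hmV s]
    exact Finset.single_le_sum (fun t' _ => hp0 s t') (Finset.mem_univ t)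
  have hWle : ∀ s t, p s t ≤ (μ (W ⁻¹' {t})).toReal := by
    intro s t; rw [hmW t]
    exact Finset.single_le_sum (fun s' _ => hp0 s' t) (Finset.mem_univ s)
  -- the Gibbs bound
  have hg := gibbs_aux (ι := SA × SX) (fun st => p st.1 st.2)
      (fun st => (μ (V ⁻¹' {st.1})).toReal * (μ (W ⁻¹' {st.2})).toReal)
      (fun st => hp0 st.1 st.2)
      (fun st => mul_nonneg ENNReal.toReal_nonneg ENNReal.toReal_nonneg)
      ?hsum1 ?hsumq ?hpos
  case hsum1 =>
    rw [Fintype.sum_prod_type]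
    have : ∀ s : SA, ∑ t : SX, p s t = (μ (V ⁻¹' {s})).toReal := fun s => (hmV s).symm
    rw [Finset.sum_congr rfl fun s _ => this s]
    exact sum_pre_one μ hV
  case hsumq =>
    rw [Fintype.sum_prod_type]
    simp only [← Finset.mul_sum]
    rw [← Finset.sum_mul, sum_pre_one μ hV, sum_pre_one μ hW, one_mul]
  case hpos =>
    rintro ⟨s, t⟩ hpos
    exact mul_pos (lt_of_lt_of_le hpos (hVle s t)) (lt_of_lt_of_le hpos (hWle s t))
  -- rewrite the Gibbs sum as the entropy difference
  have hkey : ∑ st : SA × SX, (p st.1 st.2) *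
      (Real.log ((μ (V ⁻¹' {st.1})).toReal * (μ (W ⁻¹' {st.2})).toReal)
        - Real.log (p st.1 st.2))
      = Hshannon μ (fun ω => (V ω, W ω)) - Hshannon μ V - Hshannon μ W := by
    have hV' : Hshannon μ V = ∑ st : SA × SX, -(p st.1 st.2 * Real.log (μ (V ⁻¹' {st.1})).toReal) := by
      rw [Hshannon, Fintype.sum_prod_type]
      refine Finset.sum_congr rfl fun s _ => ?_
      show Real.negMulLog (μ (V ⁻¹' {s})).toReal
          = ∑ t : SX, -(p s t * Real.log (μ (V ⁻¹' {s})).toReal)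
      rw [Finset.sum_neg_distrib, ← Finset.sum_mul, ← hmV s, Real.negMulLog, neg_mul]
    have hW' : Hshannon μ W = ∑ st : SA × SX, -(p st.1 st.2 * Real.log (μ (W ⁻¹' {st.2})).toReal) := by
      rw [Hshannon, Fintype.sum_prod_type_right]
      refine Finset.sum_congr rfl fun t _ => ?_
      show Real.negMulLog (μ (W ⁻¹' {t})).toReal
          = ∑ s : SA, -(p s t * Real.log (μ (W ⁻¹' {t})).toReal)
      rw [Finset.sum_neg_distrib, ← Finset.sum_mul, ← hmW t, Real.negMulLog, neg_mul]
    have hVW' : Hshannon μ (fun ω => (V ω, W ω)) = ∑ st : SA × SX, Real.negMulLog (p st.1 st.2) := by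
      rw [Hshannon]
      refine Finset.sum_congr rfl fun st _ => ?_
      rw [show ({st} : Set (SA × SX)) = {(st.1, st.2)} by simp, pair_pre]
    rw [hV', hW', hVW', ← Finset.sum_sub_distrib, ← Finset.sum_sub_distrib]
    refine Finset.sum_congr rfl fun st _ => ?_
    rcases eq_or_lt_of_le (hp0 st.1 st.2) with h | h
    · simp [← h, Real.negMulLog]
    · have h1 : 0 < (μ (V ⁻¹' {st.1})).toReal := lt_of_lt_of_le h (hVle st.1 st.2)
      have h2 : 0 < (μ (W ⁻¹' {st.2})).toReal := lt_of_lt_of_le h (hWle st.1 st.2)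
      rw [Real.log_mul h1.ne' h2.ne', Real.negMulLog]
      ring
  rw [hkey] at hg
  linarith

/-- The key log-sum bound: `H[A|X] ≤ ∑ₐ p(a) (log (P(X ∈ suppₓ a)) - log p(a))`. -/
private lemma condH_le_logsum (A : Ω → SA) (X : Ω → SX)
    (hA : Measurable A) (hX : Measurable X) :
    condH μ A X ≤ ∑ a : SA, (μ (A ⁻¹' {a})).toReal *
      (Real.log (∑ x : SX, if 0 < (μ (A ⁻¹' {a} ∩ X ⁻¹' {x})).toReal
          then (μ (X ⁻¹' {x})).toReal else 0)
        - Real.log (μ (A ⁻¹' {a})).toReal) := by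
  set p : SA → SX → ℝ := fun a x => (μ (A ⁻¹' {a} ∩ X ⁻¹' {x})).toReal with hpdef
  set pA : SA → ℝ := fun a => (μ (A ⁻¹' {a})).toReal with hpAdef
  set pX : SX → ℝ := fun x => (μ (X ⁻¹' {x})).toReal with hpXdef
  set Px : SA → ℝ := fun a => ∑ x : SX, if 0 < p a x then pX x else 0 with hPxdef
  have hp0 : ∀ a x, 0 ≤ p a x := fun a x => ENNReal.toReal_nonneg
  have hpA0 : ∀ a, 0 ≤ pA a := fun a => ENNReal.toReal_nonneg
  have hmA : ∀ a, pA a = ∑ x, p a x := fun a =>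
    meas_decomp μ hX (hA (measurableSet_singleton a))
  have hmX : ∀ x, pX x = ∑ a, p a x := by
    intro x
    rw [show pX x = (μ (X ⁻¹' {x})).toReal from rfl,
      meas_decomp μ hA (hX (measurableSet_singleton x))]
    exact Finset.sum_congr rfl fun a _ => by rw [Set.inter_comm]
  have hpleX : ∀ a x, p a x ≤ pX x := by
    intro a x; rw [hmX x]
    exact Finset.single_le_sum (fun a' _ => hp0 a' x) (Finset.mem_univ a)
  -- Step 1: condH as a double sum
  have hH : condH μ A X = ∑ a, ∑ x, p a x * (Real.log (pX x) - Real.log (p a x)) := by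
    rw [condH, Hshannon_pair μ A X]
    have hX' : Hshannon μ X = ∑ a, ∑ x, -(p a x * Real.log (pX x)) := by
      rw [Finset.sum_comm, Hshannon]
      refine Finset.sum_congr rfl fun x _ => ?_
      show Real.negMulLog (pX x) = ∑ a, -(p a x * Real.log (pX x))
      rw [Finset.sum_neg_distrib, ← Finset.sum_mul, ← hmX x, Real.negMulLog, neg_mul]
    rw [hX', ← Finset.sum_sub_distrib]
    refine Finset.sum_congr rfl fun a _ => ?_
    rw [← Finset.sum_sub_distrib]
    refine Finset.sum_congr rfl fun x _ => ?_
    rw [Real.negMulLog]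
    ring
  rw [hH]
  -- Step 2: per-`a` log-sum inequality
  refine Finset.sum_le_sum fun a _ => ?_
  show ∑ x, p a x * (Real.log (pX x) - Real.log (p a x))
      ≤ pA a * (Real.log (Px a) - Real.log (pA a))
  rcases eq_or_lt_of_le (hpA0 a) with hzero | hpos
  · have hall : ∀ x, p a x = 0 := by
      intro x
      have h := hmA a
      rw [← hzero] at h
      have := (Finset.sum_eq_zero_iff_of_nonneg (fun x _ => hp0 a x)).mp h.symm
      exact this x (Finset.mem_univ x)
    have : ∀ x, p a x * (Real.log (pX x) - Real.log (p a x)) = 0 := by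
      intro x; rw [hall x]; ring
    rw [Finset.sum_congr rfl fun x _ => this x, ← hzero]
    simp
  · -- pA a > 0
    have hPxge : pA a ≤ Px a := by
      rw [hmA a, hPxdef]
      refine Finset.sum_le_sum fun x _ => ?_
      by_cases h : 0 < p a x
      · rw [if_pos h]; exact hpleX a x
      · rw [if_neg h]; exact le_of_not_gt h
    have hPxpos : 0 < Px a := lt_of_lt_of_le hpos hPxge
    -- termwise bound
    have hterm : ∀ x, p a x * (Real.log (pX x) - Real.log (p a x))
        ≤ p a x * (Real.log (Px a) - Real.log (pA a))
          + ((pA a / Px a) * (if 0 < p a x then pX x else 0) - p a x) := by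
      intro x
      rcases eq_or_lt_of_le (hp0 a x) with hz | hpx
      · rw [← hz, if_neg (lt_irrefl 0)]
        simp
      · have hXpos : 0 < pX x := lt_of_lt_of_le hpx (hpleX a x)
        rw [if_pos hpx]
        have ht : (0:ℝ) < (pX x * pA a) / (p a x * Px a) :=
          div_pos (mul_pos hXpos hpos) (mul_pos hpx hPxpos)
        have hlog : Real.log ((pX x * pA a) / (p a x * Px a))
            = Real.log (pX x) + Real.log (pA a) - (Real.log (p a x) + Real.log (Px a)) := by
          rw [Real.log_div (mul_pos hXpos hpos).ne' (mul_pos hpx hPxpos).ne',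
            Real.log_mul hXpos.ne' hpos.ne', Real.log_mul hpx.ne' hPxpos.ne']
        have hle := Real.log_le_sub_one_of_pos ht
        have h2 : p a x * Real.log ((pX x * pA a) / (p a x * Px a))
            ≤ p a x * ((pX x * pA a) / (p a x * Px a) - 1) :=
          mul_le_mul_of_nonneg_left hle (hp0 a x)
        have h3 : p a x * ((pX x * pA a) / (p a x * Px a) - 1)
            = (pA a / Px a) * pX x - p a x := by
          field_simp
        rw [hlog] at h2
        rw [h3] at h2
        nlinarith [h2]
    calc ∑ x, p a x * (Real.log (pX x) - Real.log (p a x))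
        ≤ ∑ x, (p a x * (Real.log (Px a) - Real.log (pA a))
          + ((pA a / Px a) * (if 0 < p a x then pX x else 0) - p a x)) :=
          Finset.sum_le_sum fun x _ => hterm x
      _ = pA a * (Real.log (Px a) - Real.log (pA a)) := by
          rw [Finset.sum_add_distrib, ← Finset.sum_mul, Finset.sum_sub_distrib,
            ← Finset.mul_sum, ← hmA a,
            show (∑ x : SX, if 0 < p a x then pX x else 0) = Px a from rfl,
            div_mul_cancel₀ (pA a) hPxpos.ne']
          ring

end Aux

/-- **Kaced–Romashchenko–Vereshchagin support criterion.** If for all states `x` of `X` and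
`y` of `Y` there is at most one state `a` of `A` with `P(A = a, X = x) > 0` and
`P(A = a, Y = y) > 0`, then `H[A|X] + H[A|Y] ≤ H[A]`, and consequently `I[A:X] = 0` and
`I[A:Y] = 0` imply `I[A:(X,Y)] = 0`. -/
theorem krv_support_criterion
    {Ω : Type*} [MeasurableSpace Ω] (μ : Measure Ω) [IsProbabilityMeasure μ]
    {SA SX SY : Type*}
    [Fintype SA] [Nonempty SA] [MeasurableSpace SA] [MeasurableSingletonClass SA]
    [Fintype SX] [Nonempty SX] [MeasurableSpace SX] [MeasurableSingletonClass SX]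
    [Fintype SY] [Nonempty SY] [MeasurableSpace SY] [MeasurableSingletonClass SY]
    (A : Ω → SA) (X : Ω → SX) (Y : Ω → SY)
    (hA : Measurable A) (hX : Measurable X) (hY : Measurable Y)
    (hsupp : ∀ (x : SX) (y : SY) (a a' : SA),
      0 < μ {ω | A ω = a ∧ X ω = x} → 0 < μ {ω | A ω = a ∧ Y ω = y} →
      0 < μ {ω | A ω = a' ∧ X ω = x} → 0 < μ {ω | A ω = a' ∧ Y ω = y} → a = a') :
    condH μ A X + condH μ A Y ≤ Hshannon μ A ∧
    (mutInfo μ A X = 0 → mutInfo μ A Y = 0 →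
      mutInfo μ A (fun ω => (X ω, Y ω)) = 0) := by
  classical
  -- rephrase the support hypothesis via preimages and real numbers
  have hsetX : ∀ (a : SA) (x : SX), {ω | A ω = a ∧ X ω = x} = A ⁻¹' {a} ∩ X ⁻¹' {x} := by
    intro a x; rfl
  have hsetY : ∀ (a : SA) (y : SY), {ω | A ω = a ∧ Y ω = y} = A ⁻¹' {a} ∩ Y ⁻¹' {y} := by
    intro a y; rfl
  have hsupp' : ∀ (x : SX) (y : SY) (a a' : SA),
      0 < (μ (A ⁻¹' {a} ∩ X ⁻¹' {x})).toReal → 0 < (μ (A ⁻¹' {a} ∩ Y ⁻¹' {y})).toReal →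
      0 < (μ (A ⁻¹' {a'} ∩ X ⁻¹' {x})).toReal → 0 < (μ (A ⁻¹' {a'} ∩ Y ⁻¹' {y})).toReal →
      a = a' := by
    intro x y a a' h1 h2 h3 h4
    apply hsupp x y a a'
    · rw [hsetX]; exact (ENNReal.toReal_pos_iff.mp h1).1
    · rw [hsetY]; exact (ENNReal.toReal_pos_iff.mp h2).1
    · rw [hsetX]; exact (ENNReal.toReal_pos_iff.mp h3).1
    · rw [hsetY]; exact (ENNReal.toReal_pos_iff.mp h4).1
  set pA : SA → ℝ := fun a => (μ (A ⁻¹' {a})).toReal with hpAdef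
  set pX : SX → ℝ := fun x => (μ (X ⁻¹' {x})).toReal with hpXdef
  set pY : SY → ℝ := fun y => (μ (Y ⁻¹' {y})).toReal with hpYdef
  set Px : SA → ℝ := fun a => ∑ x : SX,
    if 0 < (μ (A ⁻¹' {a} ∩ X ⁻¹' {x})).toReal then pX x else 0 with hPxdef
  set Py : SA → ℝ := fun a => ∑ y : SY,
    if 0 < (μ (A ⁻¹' {a} ∩ Y ⁻¹' {y})).toReal then pY y else 0 with hPydef
  have hpA0 : ∀ a, 0 ≤ pA a := fun a => ENNReal.toReal_nonneg
  have hPx0 : ∀ a, 0 ≤ Px a := fun a => Finset.sum_nonneg fun x _ => by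
    by_cases h : 0 < (μ (A ⁻¹' {a} ∩ X ⁻¹' {x})).toReal
    · rw [if_pos h]; exact ENNReal.toReal_nonneg
    · rw [if_neg h]
  have hPy0 : ∀ a, 0 ≤ Py a := fun a => Finset.sum_nonneg fun y _ => by
    by_cases h : 0 < (μ (A ⁻¹' {a} ∩ Y ⁻¹' {y})).toReal
    · rw [if_pos h]; exact ENNReal.toReal_nonneg
    · rw [if_neg h]
  -- pA a ≤ Px a and pA a ≤ Py a
  have hpAlePx : ∀ a, pA a ≤ Px a := by
    intro a
    show pA a ≤ ∑ x : SX, if 0 < (μ (A ⁻¹' {a} ∩ X ⁻¹' {x})).toReal then pX x else 0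
    rw [show pA a = ∑ x, (μ (A ⁻¹' {a} ∩ X ⁻¹' {x})).toReal from
      meas_decomp μ hX (hA (measurableSet_singleton a))]
    refine Finset.sum_le_sum fun x _ => ?_
    by_cases h : 0 < (μ (A ⁻¹' {a} ∩ X ⁻¹' {x})).toReal
    · rw [if_pos h]
      refine ENNReal.toReal_mono (measure_ne_top μ _) (measure_mono ?_)
      exact Set.inter_subset_right
    · rw [if_neg h]; exact le_of_not_gt h
  have hpAlePy : ∀ a, pA a ≤ Py a := by
    intro a
    show pA a ≤ ∑ y : SY, if 0 < (μ (A ⁻¹' {a} ∩ Y ⁻¹' {y})).toReal then pY y else 0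
    rw [show pA a = ∑ y, (μ (A ⁻¹' {a} ∩ Y ⁻¹' {y})).toReal from
      meas_decomp μ hY (hA (measurableSet_singleton a))]
    refine Finset.sum_le_sum fun y _ => ?_
    by_cases h : 0 < (μ (A ⁻¹' {a} ∩ Y ⁻¹' {y})).toReal
    · rw [if_pos h]
      refine ENNReal.toReal_mono (measure_ne_top μ _) (measure_mono ?_)
      exact Set.inter_subset_right
    · rw [if_neg h]; exact le_of_not_gt h
  -- the rectangles are disjoint, so ∑ₐ Px a * Py a ≤ 1
  have hq1 : ∑ a, Px a * Py a ≤ 1 := by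
    have hexp : ∀ a, Px a * Py a = ∑ x : SX, ∑ y : SY,
        (if (0 < (μ (A ⁻¹' {a} ∩ X ⁻¹' {x})).toReal
            ∧ 0 < (μ (A ⁻¹' {a} ∩ Y ⁻¹' {y})).toReal) then pX x * pY y else 0) := by
      intro a
      rw [show Px a = ∑ x : SX,
          (if 0 < (μ (A ⁻¹' {a} ∩ X ⁻¹' {x})).toReal then pX x else 0) from rfl,
        show Py a = ∑ y : SY,
          (if 0 < (μ (A ⁻¹' {a} ∩ Y ⁻¹' {y})).toReal then pY y else 0) from rfl,
        Finset.sum_mul_sum]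
      refine Finset.sum_congr rfl fun x _ => Finset.sum_congr rfl fun y _ => ?_
      by_cases h1 : 0 < (μ (A ⁻¹' {a} ∩ X ⁻¹' {x})).toReal <;>
        by_cases h2 : 0 < (μ (A ⁻¹' {a} ∩ Y ⁻¹' {y})).toReal <;>
        simp [h1, h2]
    calc ∑ a, Px a * Py a
        = ∑ x : SX, ∑ y : SY, ∑ a : SA,
          (if (0 < (μ (A ⁻¹' {a} ∩ X ⁻¹' {x})).toReal
            ∧ 0 < (μ (A ⁻¹' {a} ∩ Y ⁻¹' {y})).toReal) then pX x * pY y else 0) := by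
          rw [Finset.sum_congr rfl fun a _ => hexp a, Finset.sum_comm]
          exact Finset.sum_congr rfl fun x _ => Finset.sum_comm
      _ ≤ ∑ x : SX, ∑ y : SY, pX x * pY y := by
          refine Finset.sum_le_sum fun x _ => Finset.sum_le_sum fun y _ => ?_
          refine sum_ite_le_of_unique _ (mul_nonneg ENNReal.toReal_nonneg ENNReal.toReal_nonneg) ?_
          intro a a' ⟨h1, h2⟩ ⟨h3, h4⟩
          exact hsupp' x y a a' h1 h2 h3 h4
      _ = (∑ x : SX, pX x) * (∑ y : SY, pY y) := (Finset.sum_mul_sum _ _ _ _).symm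
      _ = 1 := by rw [sum_pre_one μ hX, sum_pre_one μ hY, one_mul]
  -- part 1
  have part1 : condH μ A X + condH μ A Y ≤ Hshannon μ A := by
    have haX := condH_le_logsum μ A X hA hX
    have haY := condH_le_logsum μ A Y hA hY
    have hcomb : ∑ a, pA a * (Real.log (Px a) - Real.log (pA a))
        + ∑ a, pA a * (Real.log (Py a) - Real.log (pA a))
        ≤ Hshannon μ A := by
      have hper : ∀ a, pA a * (Real.log (Px a) - Real.log (pA a))
          + pA a * (Real.log (Py a) - Real.log (pA a))
          ≤ pA a * (Real.log (Px a * Py a) - Real.log (pA a)) + Real.negMulLog (pA a) := by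
        intro a
        rcases eq_or_lt_of_le (hpA0 a) with hz | hpos
        · rw [← hz]; simp
        · have h1 : 0 < Px a := lt_of_lt_of_le hpos (hpAlePx a)
          have h2 : 0 < Py a := lt_of_lt_of_le hpos (hpAlePy a)
          rw [Real.log_mul h1.ne' h2.ne', Real.negMulLog]
          apply le_of_eq
          ring
      have hgibbs : ∑ a, pA a * (Real.log (Px a * Py a) - Real.log (pA a)) ≤ 0 := by
        refine gibbs_aux pA (fun a => Px a * Py a) hpA0
          (fun a => mul_nonneg (hPx0 a) (hPy0 a)) (sum_pre_one μ hA) hq1 ?_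
        intro a hpos
        exact mul_pos (lt_of_lt_of_le hpos (hpAlePx a)) (lt_of_lt_of_le hpos (hpAlePy a))
      have hHA : Hshannon μ A = ∑ a, Real.negMulLog (pA a) := rfl
      calc ∑ a, pA a * (Real.log (Px a) - Real.log (pA a))
          + ∑ a, pA a * (Real.log (Py a) - Real.log (pA a))
          = ∑ a, (pA a * (Real.log (Px a) - Real.log (pA a))
            + pA a * (Real.log (Py a) - Real.log (pA a))) := (Finset.sum_add_distrib).symm
        _ ≤ ∑ a, (pA a * (Real.log (Px a * Py a) - Real.log (pA a)) + Real.negMulLog (pA a)) :=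
            Finset.sum_le_sum fun a _ => hper a
        _ = ∑ a, pA a * (Real.log (Px a * Py a) - Real.log (pA a))
            + ∑ a, Real.negMulLog (pA a) := Finset.sum_add_distrib
        _ ≤ Hshannon μ A := by rw [hHA]; linarith
    linarith
  refine ⟨part1, ?_⟩
  intro h1 h2
  -- from I[A:X] = 0, condH μ A X = Hshannon μ A, etc.
  have e1 : condH μ A X = Hshannon μ A := by
    have hs := Hshannon_pair_le μ A X hA hX
    rw [mutInfo] at h1
    rw [condH]
    linarith
  have e2 : condH μ A Y = Hshannon μ A := by
    rw [mutInfo] at h2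
    rw [condH]
    linarith
  have hHA0 : Hshannon μ A = 0 := by
    have hnn : 0 ≤ Hshannon μ A := by
      refine Finset.sum_nonneg fun a _ => ?_
      refine Real.negMulLog_nonneg ENNReal.toReal_nonneg ?_
      exact ENNReal.toReal_le_of_le_ofReal zero_le_one (by simpa using prob_le_one)
    rw [e1, e2] at part1
    linarith
  have hW : Measurable (fun ω => (X ω, Y ω)) := hX.prodMk hY
  have hmono := Hshannon_le_pair μ A (fun ω => (X ω, Y ω)) hA hW
  have hsub := Hshannon_pair_le μ A (fun ω => (X ω, Y ω)) hA hW
  rw [mutInfo]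
  rw [hHA0]
  linarith
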